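/- Fix ε ∈ (0,1/10) and q > 0. There exists a constant c_q > 0, depending only on q, such that for every ℓ ∈ (0,1), every N ≥ 3, every configuration x₁,…,x_N ∈ ℝ³, and all indices i ≠ j: Σ_{k=1}^N |∇_{x_k} F_{ij}^q| ≤ c_q ℓ^{-1} F_{ij}^{q/2}, where F_{ij}^q is viewed as a smooth function of (x₁,…,x_N) ∈ ℝ^{3N} and ∇_{x_k} denotes the gradient with respect to x_k. -/

import Mathlib

open MeasureTheory

noncomputable section

abbrev E3 := EuclideanSpace ℝ (Fin 3)

def e3 (α : Fin 3) : E3 := EuclideanSpace.single α 1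

/-- the exponential cutoff at scale ℓ: h(x) = exp(−√(|x|²+ℓ²)/ℓ) -/
def hcut (ℓ : ℝ) (x : E3) : ℝ := Real.exp (-(Real.sqrt (‖x‖ ^ 2 + ℓ ^ 2)) / ℓ)

/-- 𝒩_{ij} = Σ_{k≠i,j} [h(x_k−x_i) + h(x_k−x_j)] -/
def NNij (ℓ : ℝ) {N : ℕ} (x : Fin N → E3) (i j : Fin N) : ℝ :=
  ∑ k ∈ Finset.univ.filter (fun k => k ≠ i ∧ k ≠ j),
    (hcut ℓ (x k - x i) + hcut ℓ (x k - x j))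

/-- the triple cutoff F_{ij} = exp(−𝒩_{ij}/ℓ^ε) -/
def Fij (ℓ ε : ℝ) {N : ℕ} (x : Fin N → E3) (i j : Fin N) : ℝ :=
  Real.exp (-(NNij ℓ x i j) / ℓ ^ ε)

/-- |∇_{x_k} G| : the Euclidean norm of the gradient of G w.r.t. the variable x_k -/
def gradk {N : ℕ} (G : (Fin N → E3) → ℝ) (k : Fin N) (x : Fin N → E3) : ℝ :=
  Real.sqrt (∑ α, (fderiv ℝ G x (Pi.single k (e3 α))) ^ 2)

/-- |∇_{x_k}∇_{x_m} G| : the operator norm of the 3×3 matrix of mixed second partial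
derivatives of G in the variables x_k, x_m -/
def hessNorm {N : ℕ} (G : (Fin N → E3) → ℝ) (k m : Fin N) (x : Fin N → E3) : ℝ :=
  ‖Matrix.toEuclideanCLM (𝕜 := ℝ) (Matrix.of fun α β : Fin 3 =>
      fderiv ℝ (fun y => fderiv ℝ G y (Pi.single m (e3 β))) x (Pi.single k (e3 α)))‖

/-- bundled derivative of hcut -/
def Dh (ℓ : ℝ) (y : E3) : E3 →L[ℝ] ℝ :=
  (-(hcut ℓ y) / (ℓ * Real.sqrt (‖y‖ ^ 2 + ℓ ^ 2))) • (innerSL ℝ y)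

theorem hcut_hasFDerivAt (ℓ : ℝ) (hℓ : 0 < ℓ) (y : E3) :
    HasFDerivAt (hcut ℓ) (Dh ℓ y) y := by
  have hu : (0:ℝ) < ‖y‖ ^ 2 + ℓ ^ 2 := by positivity
  have h1 : HasFDerivAt (fun x : E3 => ‖x‖ ^ 2 + ℓ ^ 2) (2 • (innerSL ℝ y)) y := by
    simpa using ((hasFDerivAt_id y).norm_sq).add_const (ℓ ^ 2)
  have h2 : HasFDerivAt (fun x : E3 => Real.sqrt (‖x‖ ^ 2 + ℓ ^ 2))
      ((1 / (2 * Real.sqrt (‖y‖ ^ 2 + ℓ ^ 2))) • (2 • (innerSL ℝ y))) y :=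
    (Real.hasDerivAt_sqrt hu.ne').comp_hasFDerivAt y h1
  have heq : hcut ℓ = fun x : E3 => Real.exp (-(Real.sqrt (‖x‖ ^ 2 + ℓ ^ 2)) * ℓ⁻¹) := by
    funext x; rw [hcut, div_eq_mul_inv]
  rw [heq]
  have h4 := (h2.neg.mul_const ℓ⁻¹).exp
  refine h4.congr_fderiv ?_
  ext w
  simp [Dh, heq, smul_smul, div_eq_mul_inv]
  ring

theorem hcut_pos (ℓ : ℝ) (y : E3) : 0 < hcut ℓ y := Real.exp_pos _

theorem Dh_bound (ℓ : ℝ) (hℓ : 0 < ℓ) (y : E3) (w : E3) :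
    |Dh ℓ y w| ≤ hcut ℓ y / ℓ * ‖w‖ := by
  have hu : (0:ℝ) < ‖y‖ ^ 2 + ℓ ^ 2 := by positivity
  have hs : (0:ℝ) < Real.sqrt (‖y‖ ^ 2 + ℓ ^ 2) := Real.sqrt_pos.2 hu
  have hys : ‖y‖ ≤ Real.sqrt (‖y‖ ^ 2 + ℓ ^ 2) := by
    have := Real.sqrt_le_sqrt (show ‖y‖ ^ 2 ≤ ‖y‖ ^ 2 + ℓ ^ 2 by nlinarith)
    rwa [Real.sqrt_sq (norm_nonneg y)] at this
  have h1 : |Dh ℓ y w| = hcut ℓ y / (ℓ * Real.sqrt (‖y‖ ^ 2 + ℓ ^ 2)) * |inner ℝ y w| := by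
    rw [Dh]
    simp only [ContinuousLinearMap.coe_smul', Pi.smul_apply, innerSL_apply_apply, smul_eq_mul, abs_mul]
    rw [abs_div, abs_neg, abs_of_pos (hcut_pos ℓ y), abs_of_pos (by positivity)]
  rw [h1]
  calc hcut ℓ y / (ℓ * Real.sqrt (‖y‖ ^ 2 + ℓ ^ 2)) * |inner ℝ y w|
      ≤ hcut ℓ y / (ℓ * Real.sqrt (‖y‖ ^ 2 + ℓ ^ 2)) * (‖y‖ * ‖w‖) := by
        exact mul_le_mul_of_nonneg_left (abs_real_inner_le_norm y w) (div_nonneg (hcut_pos ℓ y).le (by positivity))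
    _ ≤ hcut ℓ y / ℓ * ‖w‖ := by
        rw [div_mul_eq_mul_div, div_mul_eq_mul_div, div_le_div_iff₀ (by positivity) hℓ]
        have := hcut_pos ℓ y
        calc hcut ℓ y * (‖y‖ * ‖w‖) * ℓ ≤ hcut ℓ y * (Real.sqrt (‖y‖ ^ 2 + ℓ ^ 2) * ‖w‖) * ℓ := by
              gcongr
          _ = hcut ℓ y * ‖w‖ * (ℓ * Real.sqrt (‖y‖ ^ 2 + ℓ ^ 2)) := by ring

def projE {N : ℕ} (m : Fin N) : (Fin N → E3) →L[ℝ] E3 :=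
  ContinuousLinearMap.proj m

def LNij (ℓ : ℝ) {N : ℕ} (x : Fin N → E3) (i j : Fin N) : (Fin N → E3) →L[ℝ] ℝ :=
  ∑ m ∈ Finset.univ.filter (fun k => k ≠ i ∧ k ≠ j),
    ((Dh ℓ (x m - x i)).comp (projE m - projE i) +
     (Dh ℓ (x m - x j)).comp (projE m - projE j))

theorem NN_hasFDerivAt (ℓ : ℝ) (hℓ : 0 < ℓ) {N : ℕ} (x : Fin N → E3) (i j : Fin N) :
    HasFDerivAt (fun y => NNij ℓ y i j) (LNij ℓ x i j) x := by
  unfold NNij LNij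
  apply HasFDerivAt.fun_sum
  intro m _
  have d1 : HasFDerivAt (fun y : Fin N → E3 => y m - y i)
      (projE m - projE i
        : (Fin N → E3) →L[ℝ] E3) x :=
    (projE m - projE i).hasFDerivAt
  have d2 : HasFDerivAt (fun y : Fin N → E3 => y m - y j)
      (projE m - projE j
        : (Fin N → E3) →L[ℝ] E3) x :=
    (projE m - projE j).hasFDerivAt
  exact ((hcut_hasFDerivAt ℓ hℓ (x m - x i)).comp x d1).add
        ((hcut_hasFDerivAt ℓ hℓ (x m - x j)).comp x d2)

def Bkk (ℓ : ℝ) {N : ℕ} (x : Fin N → E3) (i j k : Fin N) : ℝ :=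
  ∑ m ∈ Finset.univ.filter (fun k => k ≠ i ∧ k ≠ j),
    ((if m = k ∨ i = k then hcut ℓ (x m - x i) else 0) +
     (if m = k ∨ j = k then hcut ℓ (x m - x j) else 0))

theorem single_sub_norm {N : ℕ} (k m i : Fin N) (hmi : m ≠ i) (v : E3) :
    ‖(Pi.single k v : Fin N → E3) m - (Pi.single k v : Fin N → E3) i‖ ≤ (if m = k ∨ i = k then ‖v‖ else 0) := by
  rcases eq_or_ne m k with h | h
  · subst h
    rw [if_pos (Or.inl rfl), Pi.single_eq_same, Pi.single_eq_of_ne (Ne.symm hmi), sub_zero]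
  · rcases eq_or_ne i k with h2 | h2
    · subst h2
      rw [if_pos (Or.inr rfl), Pi.single_eq_same, Pi.single_eq_of_ne h, zero_sub, norm_neg]
    · rw [if_neg (by tauto), Pi.single_eq_of_ne h, Pi.single_eq_of_ne h2, sub_zero, norm_zero]

theorem term_bound (ℓ : ℝ) (hℓ : 0 < ℓ) {N : ℕ} (k m i : Fin N) (hmi : m ≠ i) (v : E3)
    (y : E3) :
    |Dh ℓ y ((Pi.single k v : Fin N → E3) m - (Pi.single k v : Fin N → E3) i)| ≤
      (if m = k ∨ i = k then hcut ℓ y else 0) / ℓ * ‖v‖ := by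
  calc |Dh ℓ y ((Pi.single k v : Fin N → E3) m - (Pi.single k v : Fin N → E3) i)|
      ≤ hcut ℓ y / ℓ * ‖(Pi.single k v : Fin N → E3) m - (Pi.single k v : Fin N → E3) i‖ := Dh_bound ℓ hℓ y _
    _ ≤ (if m = k ∨ i = k then hcut ℓ y else 0) / ℓ * ‖v‖ := by
        rcases (em (m = k ∨ i = k)) with h | h
        · rw [if_pos h]
          exact mul_le_mul_of_nonneg_left
            (le_trans (single_sub_norm k m i hmi v) (by rw [if_pos h])) (div_nonneg (hcut_pos ℓ y).le hℓ.le)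
        · rw [if_neg h]
          have := single_sub_norm k m i hmi v
          rw [if_neg h] at this
          have h0 : ‖(Pi.single k v : Fin N → E3) m - (Pi.single k v : Fin N → E3) i‖ = 0 := le_antisymm this (norm_nonneg _)
          rw [h0, mul_zero, zero_div, zero_mul]

theorem LNij_single_bound (ℓ : ℝ) (hℓ : 0 < ℓ) {N : ℕ} (x : Fin N → E3) (i j k : Fin N)
    (v : E3) :
    |LNij ℓ x i j (Pi.single k v)| ≤ Bkk ℓ x i j k / ℓ * ‖v‖ := by
  rw [LNij, ContinuousLinearMap.sum_apply]
  refine le_trans (Finset.abs_sum_le_sum_abs _ _) ?_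
  rw [Bkk, Finset.sum_div, Finset.sum_mul]
  apply Finset.sum_le_sum
  intro m hm
  simp only [Finset.mem_filter, Finset.mem_univ, true_and] at hm
  rw [ContinuousLinearMap.add_apply, ContinuousLinearMap.comp_apply,
    ContinuousLinearMap.comp_apply]
  have e1 : (projE m - projE i) (Pi.single k v) = (Pi.single k v : Fin N → E3) m - (Pi.single k v : Fin N → E3) i := rfl
  have e2 : (projE m - projE j) (Pi.single k v) = (Pi.single k v : Fin N → E3) m - (Pi.single k v : Fin N → E3) j := rfl
  rw [e1, e2, add_div, add_mul]
  exact le_trans (abs_add_le _ _)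
    (add_le_add (term_bound ℓ hℓ k m i hm.1 v _) (term_bound ℓ hℓ k m j hm.2 v _))

theorem Bkk_nonneg (ℓ : ℝ) {N : ℕ} (x : Fin N → E3) (i j k : Fin N) : 0 ≤ Bkk ℓ x i j k := by
  apply Finset.sum_nonneg
  intro m _
  have := hcut_pos ℓ (x m - x i)
  have := hcut_pos ℓ (x m - x j)
  positivity

theorem sum_Bkk (ℓ : ℝ) {N : ℕ} (x : Fin N → E3) (i j : Fin N) :
    ∑ k, Bkk ℓ x i j k = 2 * NNij ℓ x i j := by
  rw [NNij]
  unfold Bkk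
  rw [Finset.sum_comm]
  rw [Finset.mul_sum]
  apply Finset.sum_congr rfl
  intro m hm
  simp only [Finset.mem_filter, Finset.mem_univ, true_and] at hm
  have key : ∀ (a : ℝ) (i : Fin N), m ≠ i →
      ∑ k : Fin N, (if m = k ∨ i = k then a else 0) = 2 * a := by
    intro a i hne
    have : ∀ k : Fin N, (if m = k ∨ i = k then a else 0) =
        (if k = m then a else 0) + (if k = i then a else 0) := by
      intro k
      rcases eq_or_ne k m with h1 | h1 <;> rcases eq_or_ne k i with h2 | h2 <;>
        simp_all [eq_comm] <;> tauto
    rw [Finset.sum_congr rfl fun k _ => this k, Finset.sum_add_distrib]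
    simp [Finset.sum_ite_eq']
    ring
  rw [Finset.sum_add_distrib, key _ i hm.1, key _ j hm.2]
  ring

theorem NNij_nonneg (ℓ : ℝ) {N : ℕ} (x : Fin N → E3) (i j : Fin N) : 0 ≤ NNij ℓ x i j :=
  Finset.sum_nonneg fun m _ => by
    have := hcut_pos ℓ (x m - x i); have := hcut_pos ℓ (x m - x j); positivity

/- STATEMENT 7: first-derivative bound for the cutoff (Lemma B.2 /
`lm:nablaF`, eq. (B.3) with α = 1).  For every q > 0 there is c_q > 0,
depending only on q, such that for every ε ∈ (0,1/10), ℓ ∈ (0,1), N ≥ 3, every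
configuration and all i ≠ j:
  Σ_{k} |∇_{x_k} F_{ij}^q| ≤ c_q ℓ⁻¹ F_{ij}^{q/2}. -/
set_option maxHeartbeats 1000000 in
theorem gradient_sum_bound (q : ℝ) (hq : 0 < q) :
    ∃ c : ℝ, 0 < c ∧
      ∀ (ε : ℝ), 0 < ε → ε < 1/10 →
      ∀ (ℓ : ℝ), 0 < ℓ → ℓ < 1 →
      ∀ (N : ℕ), 3 ≤ N →
      ∀ (x : Fin N → E3) (i j : Fin N), i ≠ j →
        (∑ k, gradk (fun y => Fij ℓ ε y i j ^ q) k x) ≤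
          c * ℓ⁻¹ * Fij ℓ ε x i j ^ (q/2) := by
  refine ⟨8, by norm_num, ?_⟩
  intro ε hε hε' ℓ hℓ hℓ1 N hN x i j hij
  have htpos : 0 < ℓ ^ ε := Real.rpow_pos_of_pos hℓ ε
  set t : ℝ := ℓ ^ ε with ht
  set r : ℝ := -q / t with hr
  set A : ℝ := NNij ℓ x i j with hA
  have hA0 : 0 ≤ A := NNij_nonneg ℓ x i j
  have hG : HasFDerivAt (fun y : Fin N → E3 => Real.exp (NNij ℓ y i j * r))
      (Real.exp (A * r) • (r • LNij ℓ x i j)) x :=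
    ((NN_hasFDerivAt ℓ hℓ x i j).mul_const r).exp
  have hfun : (fun y : Fin N → E3 => Fij ℓ ε y i j ^ q)
      = fun y => Real.exp (NNij ℓ y i j * r) := by
    funext y
    rw [Fij, ← Real.exp_mul]
    congr 1
    rw [hr]; ring
  have hfd : fderiv ℝ (fun y : Fin N → E3 => Fij ℓ ε y i j ^ q) x
      = Real.exp (A * r) • (r • LNij ℓ x i j) := by rw [hfun]; exact hG.fderiv
  have hMk : ∀ (k : Fin N) (v : E3), ‖v‖ ≤ 1 →
      |(Real.exp (A * r) • (r • LNij ℓ x i j)) (Pi.single k v)| ≤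
        Real.exp (A * r) * (q / t) * (Bkk ℓ x i j k / ℓ) := by
    intro k v hv
    have h1 : |(Real.exp (A * r) • (r • LNij ℓ x i j)) (Pi.single k v)|
        = Real.exp (A * r) * (q / t) * |LNij ℓ x i j (Pi.single k v)| := by
      simp only [ContinuousLinearMap.coe_smul', Pi.smul_apply, smul_eq_mul, abs_mul,
        abs_of_pos (Real.exp_pos (A * r))]
      rw [hr, abs_div, abs_neg, abs_of_pos hq, abs_of_pos htpos, mul_assoc]
    rw [h1]
    have h2 := LNij_single_bound ℓ hℓ x i j k v
    have h3 : Bkk ℓ x i j k / ℓ * ‖v‖ ≤ Bkk ℓ x i j k / ℓ := by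
      have := Bkk_nonneg ℓ x i j k
      nlinarith [norm_nonneg v, div_nonneg this hℓ.le]
    have h4 : 0 ≤ Real.exp (A * r) * (q / t) := by positivity
    nlinarith [abs_nonneg (LNij ℓ x i j (Pi.single k v))]
  have hgrad : ∀ k : Fin N, gradk (fun y => Fij ℓ ε y i j ^ q) k x ≤
      Real.sqrt 3 * (Real.exp (A * r) * (q / t) * (Bkk ℓ x i j k / ℓ)) := by
    intro k
    set M : ℝ := Real.exp (A * r) * (q / t) * (Bkk ℓ x i j k / ℓ) with hM
    have hM0 : 0 ≤ M := by
      have := Bkk_nonneg ℓ x i j k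
      positivity
    rw [gradk]
    have hsum : ∑ α : Fin 3, (fderiv ℝ (fun y => Fij ℓ ε y i j ^ q) x
        (Pi.single k (e3 α))) ^ 2 ≤ ∑ _α : Fin 3, M ^ 2 := by
      apply Finset.sum_le_sum
      intro α _
      have hnorm : ‖e3 α‖ ≤ 1 := by
        rw [e3, EuclideanSpace.norm_single, norm_one]
      have := hMk k (e3 α) hnorm
      rw [hfd]
      exact sq_le_sq' (by linarith [abs_nonneg ((Real.exp (A * r) • (r • LNij ℓ x i j))
        (Pi.single k (e3 α))), neg_abs_le ((Real.exp (A * r) • (r • LNij ℓ x i j))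
        (Pi.single k (e3 α)))]) (le_trans (le_abs_self _) this)
    calc Real.sqrt (∑ α : Fin 3, (fderiv ℝ (fun y => Fij ℓ ε y i j ^ q) x
          (Pi.single k (e3 α))) ^ 2)
        ≤ Real.sqrt (∑ _α : Fin 3, M ^ 2) := Real.sqrt_le_sqrt hsum
      _ = Real.sqrt 3 * M := by
          rw [Finset.sum_const, Finset.card_univ, Fintype.card_fin]
          rw [nsmul_eq_mul]
          rw [show ((3:ℕ):ℝ) = (3:ℝ) by norm_num]
          rw [Real.sqrt_mul (by norm_num), Real.sqrt_sq hM0]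
  -- sum over k
  have hsumk : (∑ k, gradk (fun y => Fij ℓ ε y i j ^ q) k x) ≤
      Real.sqrt 3 * Real.exp (A * r) * (q / t) / ℓ * (2 * A) := by
    calc (∑ k, gradk (fun y => Fij ℓ ε y i j ^ q) k x)
        ≤ ∑ k, Real.sqrt 3 * (Real.exp (A * r) * (q / t) * (Bkk ℓ x i j k / ℓ)) :=
          Finset.sum_le_sum fun k _ => hgrad k
      _ = Real.sqrt 3 * Real.exp (A * r) * (q / t) / ℓ * ∑ k, Bkk ℓ x i j k := by
          rw [Finset.mul_sum]
          exact Finset.sum_congr rfl fun k _ => by ring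
      _ = Real.sqrt 3 * Real.exp (A * r) * (q / t) / ℓ * (2 * A) := by
          rw [sum_Bkk]
  refine le_trans hsumk ?_
  -- numeric estimate
  have hFij : Fij ℓ ε x i j ^ (q/2) = Real.exp (-(q * A / t) / 2) := by
    rw [Fij, ← Real.exp_mul]
    congr 1
    ring
  rw [hFij]
  set s : ℝ := q * A / t with hs
  have hs0 : 0 ≤ s := by positivity
  have hAr : A * r = -s := by rw [hr, hs]; ring
  have hexp2 : Real.exp (-s) = Real.exp (-(s/2)) * Real.exp (-(s/2)) := by
    rw [← Real.exp_add]; congr 1; ring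
  have hkey1 : s * Real.exp (-(s/2)) ≤ 2 := by
    rw [Real.exp_neg, ← div_eq_mul_inv, div_le_iff₀ (Real.exp_pos _)]
    nlinarith [Real.add_one_le_exp (s/2)]
  have hkey2 : Real.sqrt 3 ≤ 2 := by
    have h34 : Real.sqrt 3 ≤ Real.sqrt 4 := Real.sqrt_le_sqrt (by norm_num)
    rwa [show (4:ℝ) = 2 ^ 2 by norm_num, Real.sqrt_sq (by norm_num : (0:ℝ) ≤ 2)] at h34
  have hE2 : 0 < Real.exp (-(s/2)) := Real.exp_pos _
  have hgoal : Real.sqrt 3 * Real.exp (-s) * (q / t) / ℓ * (2 * A) ≤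
      8 * ℓ⁻¹ * Real.exp (-(s/2)) := by
    have hqtA : (q / t) * A = s := by rw [hs]; ring
    have lhseq : Real.sqrt 3 * Real.exp (-s) * (q / t) / ℓ * (2 * A)
        = (2 * Real.sqrt 3 * (s * Real.exp (-(s/2)) * Real.exp (-(s/2)))) * ℓ⁻¹ := by
      rw [hexp2, ← hqtA]; field_simp
    rw [lhseq]
    have h8 : 2 * Real.sqrt 3 * (s * Real.exp (-(s/2)) * Real.exp (-(s/2))) ≤
        8 * Real.exp (-(s/2)) := by
      nlinarith [mul_le_mul_of_nonneg_right hkey1 hE2.le, Real.sqrt_nonneg 3,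
        mul_nonneg (mul_nonneg hs0 hE2.le) hE2.le]
    have hinv : 0 ≤ ℓ⁻¹ := by positivity
    calc (2 * Real.sqrt 3 * (s * Real.exp (-(s/2)) * Real.exp (-(s/2)))) * ℓ⁻¹
        ≤ (8 * Real.exp (-(s/2))) * ℓ⁻¹ := mul_le_mul_of_nonneg_right h8 hinv
      _ = 8 * ℓ⁻¹ * Real.exp (-(s/2)) := by ring
  calc Real.sqrt 3 * Real.exp (A * r) * (q / t) / ℓ * (2 * A)
      = Real.sqrt 3 * Real.exp (-s) * (q / t) / ℓ * (2 * A) := by rw [hAr]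
    _ ≤ 8 * ℓ⁻¹ * Real.exp (-(s/2)) := hgoal
    _ = 8 * ℓ⁻¹ * Real.exp (-s / 2) := by rw [show -s / 2 = -(s/2) by ring]
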